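/- Let a, ξ ∈ ℝ and H a Schwartz function on ℝ. The ODE (ξ+i) D_x v + a v = D_x H (with D_x = (2πi)^{-1} d/dx) has a unique Schwartz solution v, and it satisfies ‖v‖_{L¹} ≤ C ‖H‖_{L¹} with an absolute constant C independent of a, ξ, H. Moreover, if a ≠ 0 then v = D_x w for some Schwartz function w. -/

import Mathlib

open MeasureTheory Real Set Filter Topology

noncomputable section
namespace ODE4

lemma integral_exp_neg_mul_Ioi' {c : ℝ} (hc : 0 < c) : ∫ t in Ioi (0:ℝ), Real.exp (-c * t) = c⁻¹ := by
  have h : ∀ t ∈ Ici (0:ℝ), HasDerivAt (fun t => -c⁻¹ * Real.exp (-c * t)) (Real.exp (-c*t)) t := by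
    intro t _
    have h1 : HasDerivAt (fun t : ℝ => -c * t) (-c) t := by
      simpa using (hasDerivAt_id t).const_mul (-c)
    have := (h1.exp).const_mul (-c⁻¹)
    exact this.congr_deriv (by field_simp)
  have hlim : Tendsto (fun t : ℝ => -c⁻¹ * Real.exp (-c * t)) atTop (𝓝 (0:ℝ)) := by
    have h2 : Tendsto (fun t : ℝ => Real.exp (-c*t)) atTop (𝓝 (0:ℝ)) := by
      apply Real.tendsto_exp_atBot.comp
      exact Tendsto.const_mul_atTop_of_neg (neg_lt_zero.mpr hc) tendsto_id
    simpa using h2.const_mul (-c⁻¹)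
  rw [integral_Ioi_of_hasDerivAt_of_tendsto' h (exp_neg_integrableOn_Ioi 0 hc) hlim]
  norm_num

/-- bound on a Schwartz function -/
lemma bound0 (f : SchwartzMap ℝ ℂ) : ∃ C : ℝ, 0 ≤ C ∧ ∀ x, ‖f x‖ ≤ C := by
  obtain ⟨C, hCpos, hC⟩ := f.decay 0 0
  exact ⟨C, hCpos.le, fun x => by simpa [norm_iteratedFDeriv_zero] using hC x⟩

lemma boundk (f : SchwartzMap ℝ ℂ) (k : ℕ) : ∃ C : ℝ, 0 ≤ C ∧ ∀ x : ℝ, ‖x‖ ^ k * ‖f x‖ ≤ C := by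
  obtain ⟨C, hCpos, hC⟩ := f.decay k 0
  exact ⟨C, hCpos.le, fun x => by simpa [norm_iteratedFDeriv_zero] using hC x⟩

variable (μ : ℂ)

def T (f : ℝ → ℂ) (x : ℝ) : ℂ := ∫ t in Ioi (0:ℝ), Complex.exp (-μ * t) * f (x - t)

lemma norm_ker (t : ℝ) : ‖Complex.exp (-μ * t)‖ = Real.exp (-μ.re * t) := by
  rw [Complex.norm_exp]
  norm_num [Complex.mul_re]

variable {μ}

lemma ker_integrableOn (hμ : 0 < μ.re) :
    IntegrableOn (fun t : ℝ => Complex.exp (-μ * t)) (Ioi 0) := by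
  apply Integrable.mono' (exp_neg_integrableOn_Ioi 0 hμ)
  · exact (Complex.continuous_exp.comp (by fun_prop)).aestronglyMeasurable
  · exact ae_of_all _ fun t => (norm_ker μ t).le

lemma integrand_integrableOn (hμ : 0 < μ.re) (f : SchwartzMap ℝ ℂ) (x : ℝ) :
    IntegrableOn (fun t : ℝ => Complex.exp (-μ * t) * f (x - t)) (Ioi 0) := by
  obtain ⟨C, hC0, hC⟩ := bound0 f
  apply Integrable.mono' ((exp_neg_integrableOn_Ioi 0 hμ).mul_const C)
  · exact ((Complex.continuous_exp.comp (by fun_prop)).mul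
      (f.continuous.comp (by fun_prop))).aestronglyMeasurable
  · refine ae_of_all _ fun t => ?_
    rw [norm_mul, norm_ker]
    exact mul_le_mul_of_nonneg_left (hC _) (Real.exp_nonneg _)

lemma pow_integrableOn (hμ : 0 < μ.re) (k : ℕ) :
    IntegrableOn (fun t : ℝ => t ^ k * Real.exp (-μ.re * t)) (Ioi 0) := by
  have h0 : (-1:ℝ) < (k:ℝ) := lt_of_lt_of_le (by norm_num) (Nat.cast_nonneg k)
  have := integrableOn_rpow_mul_exp_neg_mul_rpow (p := 1) (s := k) h0 one_pos hμ
  apply this.congr_fun ?_ measurableSet_Ioi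
  intro t ht
  simp [Real.rpow_one, Real.rpow_natCast]

/-- decay of `T f` -/
lemma T_decay (hμ : 0 < μ.re) (f : SchwartzMap ℝ ℂ) (k : ℕ) :
    ∃ C : ℝ, ∀ x : ℝ, ‖x‖ ^ k * ‖T μ f x‖ ≤ C := by
  obtain ⟨C0, hC00, hC0⟩ := bound0 f
  obtain ⟨Ck, hCk0, hCk⟩ := boundk f k
  refine ⟨2 ^ k * ∫ t in Ioi (0:ℝ), Real.exp (-μ.re * t) * (Ck + C0 * t ^ k), fun x => ?_⟩
  have h1 : ‖T μ f x‖ ≤ ∫ t in Ioi (0:ℝ), Real.exp (-μ.re * t) * ‖f (x - t)‖ := by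
    refine (norm_integral_le_integral_norm _).trans_eq ?_
    refine setIntegral_congr_fun measurableSet_Ioi fun t _ => ?_
    rw [norm_mul, norm_ker]
  have h2 : ‖x‖ ^ k * ‖T μ f x‖ ≤
      ∫ t in Ioi (0:ℝ), ‖x‖ ^ k * (Real.exp (-μ.re * t) * ‖f (x - t)‖) := by
    rw [integral_const_mul]
    exact mul_le_mul_of_nonneg_left h1 (by positivity)
  refine h2.trans ?_
  rw [← integral_const_mul]
  have hint1 : IntegrableOn (fun t : ℝ => Real.exp (-μ.re * t) * ‖f (x - t)‖) (Ioi 0) := by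
    have h := (integrand_integrableOn hμ f x).norm
    refine MeasureTheory.IntegrableOn.congr_fun h ?_ measurableSet_Ioi
    intro t ht
    simp only [norm_mul, norm_ker]
  have hint2 : IntegrableOn (fun t : ℝ => Real.exp (-μ.re * t) * (Ck + C0 * t ^ k)) (Ioi 0) := by
    have h := ((pow_integrableOn hμ 0).const_mul Ck).add ((pow_integrableOn hμ k).const_mul C0)
    refine MeasureTheory.IntegrableOn.congr_fun h ?_ measurableSet_Ioi
    intro t ht
    simp only [Pi.add_apply, pow_zero, one_mul]
    ring
  apply setIntegral_mono_on (hint1.const_mul _) (hint2.const_mul _) measurableSet_Ioi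
  · intro t ht
    have ht' : (0:ℝ) < t := ht
    -- key pointwise inequality
    have hxk : ‖x‖ ^ k ≤ 2 ^ k * (t ^ k + ‖x - t‖ ^ k) := by
      have h3 : ‖x‖ ≤ 2 * max t ‖x - t‖ := by
        have : ‖x‖ ≤ t + ‖x - t‖ := by
          have := norm_sub_norm_le x (x - t)
          simp only [sub_sub_cancel, Real.norm_eq_abs] at this ⊢
          cases' abs_cases t with h h <;> nlinarith [abs_nonneg (x - t), abs_nonneg x]
        refine this.trans ?_
        have := le_max_left t ‖x - t‖
        have := le_max_right t ‖x - t‖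
        linarith
      calc ‖x‖ ^ k ≤ (2 * max t ‖x - t‖) ^ k := by
            exact pow_le_pow_left₀ (norm_nonneg x) h3 k
        _ = 2 ^ k * (max t ‖x - t‖) ^ k := by rw [mul_pow]
        _ ≤ 2 ^ k * (t ^ k + ‖x - t‖ ^ k) := by
            apply mul_le_mul_of_nonneg_left ?_ (by positivity)
            rcases max_cases t ‖x - t‖ with ⟨h, _⟩ | ⟨h, _⟩ <;> rw [h] <;>
              nlinarith [pow_nonneg ht'.le k, pow_nonneg (norm_nonneg (x - t)) k]
    calc ‖x‖ ^ k * (Real.exp (-μ.re * t) * ‖f (x - t)‖)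
        ≤ (2 ^ k * (t ^ k + ‖x - t‖ ^ k)) * (Real.exp (-μ.re * t) * ‖f (x - t)‖) := by
          apply mul_le_mul_of_nonneg_right hxk (by positivity)
      _ = 2 ^ k * (Real.exp (-μ.re * t) * (t ^ k * ‖f (x - t)‖ + ‖x - t‖ ^ k * ‖f (x - t)‖)) := by
          ring
      _ ≤ 2 ^ k * (Real.exp (-μ.re * t) * (t ^ k * C0 + Ck)) := by
          apply mul_le_mul_of_nonneg_left ?_ (by positivity)
          apply mul_le_mul_of_nonneg_left ?_ (Real.exp_nonneg _)
          have := hCk (x - t)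
          have := hC0 (x - t)
          have h5 : t ^ k * ‖f (x - t)‖ ≤ t ^ k * C0 :=
            mul_le_mul_of_nonneg_left (hC0 _) (by positivity)
          simp only [Real.norm_eq_abs] at hCk
          have h6 : ‖x - t‖ ^ k * ‖f (x - t)‖ ≤ Ck := hCk (x - t)
          linarith
      _ = 2 ^ k * (Real.exp (-μ.re * t) * (Ck + C0 * t ^ k)) := by ring


lemma hasDerivAt_T (hμ : 0 < μ.re) (f : SchwartzMap ℝ ℂ) (x₀ : ℝ) :
    HasDerivAt (T μ f) (T μ (SchwartzMap.derivCLM ℝ ℂ f) x₀) x₀ := by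
  obtain ⟨C, hC0, hC⟩ := bound0 (SchwartzMap.derivCLM ℝ ℂ f)
  have key := hasDerivAt_integral_of_dominated_loc_of_deriv_le
    (F := fun x t => Complex.exp (-μ * t) * f (x - t))
    (F' := fun x t => Complex.exp (-μ * t) * deriv f (x - t))
    (μ := volume.restrict (Ioi 0)) (x₀ := x₀)
    (bound := fun t => Real.exp (-μ.re * t) * C) (s := Metric.ball x₀ 1) (Metric.ball_mem_nhds x₀ one_pos)
    ?_ (integrand_integrableOn hμ f x₀) ?_ ?_ ?_ ?_
  · exact key.2
  · exact Eventually.of_forall fun x =>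
      ((Complex.continuous_exp.comp (by fun_prop)).mul
        (f.continuous.comp (by fun_prop))).aestronglyMeasurable
  · exact ((Complex.continuous_exp.comp (by fun_prop)).mul
      (((f.smooth ⊤).continuous_deriv (mod_cast le_top)).comp (by fun_prop))).aestronglyMeasurable
  · refine ae_of_all _ fun t x _ => ?_
    rw [norm_mul, norm_ker]
    apply mul_le_mul_of_nonneg_left ?_ (Real.exp_nonneg _)
    simpa using hC (x - t)
  · exact (exp_neg_integrableOn_Ioi 0 hμ).mul_const C
  · refine ae_of_all _ fun t x _ => ?_
    have h1 : HasDerivAt (fun x : ℝ => f (x - t)) (deriv f (x - t)) x :=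
      HasDerivAt.comp_sub_const x t (f.differentiable.differentiableAt.hasDerivAt)
    exact h1.const_mul _

lemma T_FTC (hμ : 0 < μ.re) (f : SchwartzMap ℝ ℂ) (x : ℝ) :
    T μ (SchwartzMap.derivCLM ℝ ℂ f) x = f x - μ * T μ f x := by
  obtain ⟨C, hC0, hC⟩ := bound0 f
  have hg : ∀ t ∈ Ici (0:ℝ), HasDerivAt (fun t : ℝ => Complex.exp (-μ * t) * f (x - t))
      (-μ * (Complex.exp (-μ * t) * f (x - t))
        + Complex.exp (-μ * t) * (-(deriv f (x - t)))) t := by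
    intro t _
    have h1 : HasDerivAt (fun t : ℝ => Complex.exp (-μ * t)) (-μ * Complex.exp (-μ * t)) t := by
      have hid : HasDerivAt (fun t : ℝ => -μ * (t:ℂ)) (-μ) t := by
        simpa using (Complex.ofRealCLM.hasDerivAt (x := t)).const_mul (-μ)
      simpa [mul_comm] using hid.cexp
    have h2 : HasDerivAt (fun t : ℝ => f (x - t)) (-(deriv f (x - t))) t :=
      HasDerivAt.comp_const_sub x t (f.differentiable.differentiableAt.hasDerivAt)
    have := h1.mul h2
    exact this.congr_deriv (by ring)
  have hint1 := integrand_integrableOn hμ f x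
  have hint2 := integrand_integrableOn hμ (SchwartzMap.derivCLM ℝ ℂ f) x
  have hint2' : IntegrableOn (fun t : ℝ => Complex.exp (-μ * t) * (-(deriv f (x - t)))) (Ioi 0) := by
    refine MeasureTheory.IntegrableOn.congr_fun hint2.neg (fun t ht => ?_) measurableSet_Ioi
    simp only [Pi.neg_apply, SchwartzMap.derivCLM_apply]
    ring
  have hlim : Tendsto (fun t : ℝ => Complex.exp (-μ * t) * f (x - t)) atTop (𝓝 0) := by
    apply squeeze_zero_norm (a := fun t => Real.exp (-μ.re * t) * C)
    · intro t
      rw [norm_mul, norm_ker]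
      exact mul_le_mul_of_nonneg_left (hC _) (Real.exp_nonneg _)
    · have h2 : Tendsto (fun t : ℝ => Real.exp (-μ.re * t)) atTop (𝓝 (0:ℝ)) := by
        apply Real.tendsto_exp_atBot.comp
        exact Tendsto.const_mul_atTop_of_neg (neg_lt_zero.mpr hμ) tendsto_id
      simpa using h2.mul_const C
  have key := integral_Ioi_of_hasDerivAt_of_tendsto' hg
    (((hint1.const_mul (-μ)).add hint2')) hlim
  have hsplit : (∫ t in Ioi (0:ℝ), (-μ * (Complex.exp (-μ * t) * f (x - t))
      + Complex.exp (-μ * t) * (-(deriv f (x - t)))))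
      = -μ * T μ f x - T μ (SchwartzMap.derivCLM ℝ ℂ f) x := by
    have h7 : (∫ t in Ioi (0:ℝ), Complex.exp (-μ * t) * (-(deriv f (x - t))))
        = - T μ (SchwartzMap.derivCLM ℝ ℂ f) x := by
      rw [T, ← integral_neg]
      refine setIntegral_congr_fun measurableSet_Ioi fun t _ => ?_
      simp only [SchwartzMap.derivCLM_apply]
      ring
    rw [integral_add (hint1.const_mul (-μ)) hint2', integral_const_mul, h7]
    simp only [T]
    ring
  rw [hsplit] at key
  simp only [Complex.ofReal_zero, mul_zero, Complex.exp_zero, zero_sub, sub_zero, one_mul] at key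
  -- key : -μ * T μ f x - T μ (derivCLM f) x = 0 - (1 * f x)  (roughly)
  have : T μ (SchwartzMap.derivCLM ℝ ℂ f) x = f x - μ * T μ f x := by linear_combination -key
  exact this


lemma T_deriv (hμ : 0 < μ.re) (f : SchwartzMap ℝ ℂ) :
    deriv (T μ f) = T μ (SchwartzMap.derivCLM ℝ ℂ f) :=
  funext fun x => (hasDerivAt_T hμ f x).deriv

lemma T_contDiff (hμ : 0 < μ.re) : ∀ (n : ℕ) (f : SchwartzMap ℝ ℂ), ContDiff ℝ n (T μ f) := by
  intro n
  induction n with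
  | zero =>
    intro f
    have hd : Differentiable ℝ (T μ f) := fun x => (hasDerivAt_T hμ f x).differentiableAt
    have hc : Continuous (T μ f) := hd.continuous
    rw [show ((0:ℕ) : WithTop ℕ∞) = 0 by norm_cast]
    exact contDiff_zero.mpr hc
  | succ n ih =>
    intro f
    rw [show ((n+1 : ℕ) : WithTop ℕ∞) = (n : WithTop ℕ∞) + 1 by norm_cast]
    refine contDiff_succ_iff_deriv.mpr ⟨fun x => (hasDerivAt_T hμ f x).differentiableAt,
      by simp, ?_⟩
    rw [T_deriv hμ f]
    exact ih _

lemma T_iteratedDeriv (hμ : 0 < μ.re) : ∀ (n : ℕ) (f : SchwartzMap ℝ ℂ),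
    iteratedDeriv n (T μ f) = T μ ((SchwartzMap.derivCLM ℝ ℂ)^[n] f) := by
  intro n
  induction n with
  | zero => intro f; simp [iteratedDeriv_zero]
  | succ n ih =>
    intro f
    rw [iteratedDeriv_succ', T_deriv hμ f, ih (SchwartzMap.derivCLM ℝ ℂ f),
      Function.iterate_succ_apply]

def TS (hμ : 0 < μ.re) (f : SchwartzMap ℝ ℂ) : SchwartzMap ℝ ℂ where
  toFun := T μ f
  smooth' := contDiff_infty.mpr fun n => T_contDiff hμ n f
  decay' := by
    intro k n
    obtain ⟨C, hC⟩ := T_decay hμ ((SchwartzMap.derivCLM ℝ ℂ)^[n] f) k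
    refine ⟨C, fun x => ?_⟩
    rw [norm_iteratedFDeriv_eq_norm_iteratedDeriv, T_iteratedDeriv hμ n f]
    exact hC x

@[simp] lemma TS_apply (hμ : 0 < μ.re) (f : SchwartzMap ℝ ℂ) (x : ℝ) :
    TS hμ f x = T μ f x := rfl

lemma T_L1 (hμ : 0 < μ.re) (f : SchwartzMap ℝ ℂ) :
    ∫ x : ℝ, ‖T μ f x‖ ≤ μ.re⁻¹ * ∫ x : ℝ, ‖f x‖ := by
  set k : ℝ → ℂ := (Ioi (0:ℝ)).indicator (fun t => Complex.exp (-μ * t)) with hk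
  have hkint : Integrable k := by
    rw [hk, integrable_indicator_iff measurableSet_Ioi]
    exact ker_integrableOn hμ
  have hΦ : Integrable (fun p : ℝ × ℝ => k p.2 * f (p.1 - p.2))
      (volume.prod volume) := by
    exact hkint.convolution_integrand (ContinuousLinearMap.mul ℝ ℂ) (f.integrable (μ := volume))
  have hTeq : ∀ x : ℝ, T μ f x = ∫ t : ℝ, k t * f (x - t) := by
    intro x
    rw [T, ← integral_indicator measurableSet_Ioi]
    congr 1
    funext t
    rw [hk, Set.indicator_mul_left]
  have hnorm : ∀ x : ℝ, ‖T μ f x‖ ≤ ∫ t : ℝ, ‖k t * f (x - t)‖ := by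
    intro x
    rw [hTeq x]
    exact norm_integral_le_integral_norm _
  have h1 : ∫ x : ℝ, ‖T μ f x‖ ≤ ∫ x : ℝ, ∫ t : ℝ, ‖k t * f (x - t)‖ := by
    refine integral_mono_of_nonneg (ae_of_all _ fun x => norm_nonneg _) ?_
      (ae_of_all _ hnorm)
    exact hΦ.norm.integral_prod_left
  have h2 : (∫ x : ℝ, ∫ t : ℝ, ‖k t * f (x - t)‖)
      = ∫ t : ℝ, ∫ x : ℝ, ‖k t * f (x - t)‖ := by
    exact integral_integral_swap hΦ.norm
  have h3 : ∀ t : ℝ, (∫ x : ℝ, ‖k t * f (x - t)‖) = ‖k t‖ * ∫ x : ℝ, ‖f x‖ := by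
    intro t
    simp_rw [norm_mul]
    rw [integral_const_mul, integral_sub_right_eq_self (fun x => ‖f x‖) t]
  have h4 : (∫ t : ℝ, ‖k t‖) = μ.re⁻¹ := by
    have : (fun t : ℝ => ‖k t‖) = (Ioi (0:ℝ)).indicator (fun t => Real.exp (-μ.re * t)) := by
      funext t
      rw [hk, norm_indicator_eq_indicator_norm]
      by_cases h : t ∈ Ioi (0:ℝ) <;> simp [h, Complex.norm_exp, Complex.mul_re]
    rw [this, integral_indicator measurableSet_Ioi, integral_exp_neg_mul_Ioi' hμ]
  calc ∫ x : ℝ, ‖T μ f x‖ ≤ ∫ t : ℝ, ∫ x : ℝ, ‖k t * f (x - t)‖ := h1.trans_eq h2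
    _ = (∫ t : ℝ, ‖k t‖) * ∫ x : ℝ, ‖f x‖ := by
        simp_rw [h3]
        rw [integral_mul_const]
    _ = μ.re⁻¹ * ∫ x : ℝ, ‖f x‖ := by rw [h4]


lemma hasDerivAt_cexp_mul (c : ℂ) (x : ℝ) :
    HasDerivAt (fun t : ℝ => Complex.exp (c * t)) (c * Complex.exp (c * x)) x := by
  have hid : HasDerivAt (fun t : ℝ => c * (t : ℂ)) c x := by
    simpa using (Complex.ofRealCLM.hasDerivAt (x := x)).const_mul c
  simpa [mul_comm] using hid.cexp

lemma xi_ne (ξ : ℝ) : (ξ : ℂ) + Complex.I ≠ 0 := by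
  intro h
  have := congrArg Complex.im h
  simp at this

lemma two_pi_I_ne : (2 * (π:ℂ) * Complex.I) ≠ 0 := by
  simp [Real.pi_ne_zero, Complex.I_ne_zero, Complex.ofReal_ne_zero]

/-- Uniqueness of Schwartz solutions. -/
lemma uniq (a ξ : ℝ) (H : SchwartzMap ℝ ℂ) (v₁ v₂ : SchwartzMap ℝ ℂ)
    (h₁ : ∀ x : ℝ, (ξ + Complex.I) * (deriv v₁ x / (2 * π * Complex.I)) + a * v₁ x
          = deriv H x / (2 * π * Complex.I))
    (h₂ : ∀ x : ℝ, (ξ + Complex.I) * (deriv v₂ x / (2 * π * Complex.I)) + a * v₂ x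
          = deriv H x / (2 * π * Complex.I)) : v₁ = v₂ := by
  set u : SchwartzMap ℝ ℂ := v₁ - v₂ with hu
  set μ' : ℂ := 2 * π * Complex.I * a / (ξ + Complex.I) with hμ'
  have hcoe : ⇑u = ⇑v₁ - ⇑v₂ := by funext x; simp [hu, SchwartzMap.sub_apply]
  have hud : ∀ x : ℝ, deriv u x = -μ' * u x := by
    intro x
    have hd : deriv u x = deriv v₁ x - deriv v₂ x := by
      rw [hcoe]
      exact deriv_sub (v₁.differentiable.differentiableAt) (v₂.differentiable.differentiableAt)
    have hux : u x = v₁ x - v₂ x := by rw [hcoe]; simp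
    have e : (ξ + Complex.I) * (deriv u x / (2 * π * Complex.I)) + a * u x = 0 := by
      rw [hd, hux]
      push_cast
      linear_combination h₁ x - h₂ x
    rw [hμ']
    field_simp [xi_ne ξ, two_pi_I_ne] at e ⊢
    linear_combination e
  set E : ℝ → ℂ := fun x => Complex.exp (μ' * x) * u x with hE
  have hEd : ∀ x : ℝ, HasDerivAt E 0 x := by
    intro x
    have h1 := hasDerivAt_cexp_mul μ' x
    have h2 := u.differentiable.differentiableAt.hasDerivAt (x := x)
    have := h1.mul h2
    exact this.congr_deriv (by rw [hud x]; ring)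
  have hconst : ∀ x : ℝ, E x = E 0 :=
    fun x => is_const_of_deriv_eq_zero (fun y => (hEd y).differentiableAt)
      (fun y => (hEd y).deriv) x 0
  obtain ⟨C, hC0, hC⟩ := boundk u 1
  have hE0 : E 0 = 0 := by
    have hbound : ∀ (x : ℝ), 1 ≤ |x| → μ'.re * x ≤ 0 → ‖E 0‖ ≤ C / |x| := by
      intro x hx1 hxs
      have hxpos : (0:ℝ) < |x| := lt_of_lt_of_le one_pos hx1
      have h5 : ‖E x‖ = Real.exp (μ'.re * x) * ‖u x‖ := by
        rw [hE]
        simp only [norm_mul, Complex.norm_exp]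
        congr 2
        simp [Complex.mul_re]
      have h6 : ‖u x‖ ≤ C / |x| := by
        rw [le_div_iff₀ hxpos]
        have := hC x
        simpa [Real.norm_eq_abs, mul_comm] using this
      have h7 : Real.exp (μ'.re * x) ≤ 1 := Real.exp_le_one_iff.mpr hxs
      calc ‖E 0‖ = ‖E x‖ := by rw [hconst x]
        _ = Real.exp (μ'.re * x) * ‖u x‖ := h5
        _ ≤ 1 * (C / |x|) := by
            apply mul_le_mul h7 h6 (norm_nonneg _) one_pos.le
        _ = C / |x| := one_mul _
    have hkey : ∀ n : ℕ, 1 ≤ n → ‖E 0‖ ≤ C / n := by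
      intro n hn
      have hn1 : (1:ℝ) ≤ (n:ℝ) := by exact_mod_cast hn
      rcases le_or_gt 0 μ'.re with hre | hre
      · have := hbound (-(n:ℝ)) (by rw [abs_neg, abs_of_nonneg (by linarith)]; exact hn1)
          (by nlinarith)
        rwa [abs_neg, abs_of_nonneg (by linarith : (0:ℝ) ≤ (n:ℝ))] at this
      · have := hbound ((n:ℝ)) (by rw [abs_of_nonneg (by linarith)]; exact hn1)
          (by nlinarith)
        rwa [abs_of_nonneg (by linarith : (0:ℝ) ≤ (n:ℝ))] at this
    have hle : ‖E 0‖ ≤ 0 := by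
      refine ge_of_tendsto (tendsto_const_div_atTop_nhds_zero_nat C) ?_
      exact eventually_atTop.mpr ⟨1, fun n hn => hkey n hn⟩
    exact norm_le_zero_iff.mp hle
  have huzero : ∀ x : ℝ, u x = 0 := by
    intro x
    have := hconst x
    rw [hE0] at this
    have hexp := Complex.exp_ne_zero (μ' * x)
    exact (mul_eq_zero.mp this).resolve_left hexp
  ext x
  have := huzero x
  rw [hcoe] at this
  simp only [Pi.sub_apply, sub_eq_zero] at this
  exact this


/-- Existence for `a > 0`. -/
lemma sol_pos (a ξ : ℝ) (ha : 0 < a) (H : SchwartzMap ℝ ℂ) :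
    ∃ v : SchwartzMap ℝ ℂ,
      (∀ x : ℝ, (ξ + Complex.I) * (deriv v x / (2 * π * Complex.I)) + a * v x
          = deriv H x / (2 * π * Complex.I)) ∧
      (∫ x : ℝ, ‖v x‖) ≤ 2 * ∫ x : ℝ, ‖H x‖ := by
  have hξ := xi_ne ξ
  set μ : ℂ := 2 * π * Complex.I * a / (ξ + Complex.I) with hμdef
  have hre : μ.re = 2 * π * a / (ξ ^ 2 + 1) := by
    rw [hμdef, Complex.div_re]
    simp [Complex.normSq_apply, Complex.mul_re, Complex.mul_im]
    ring
  have hμ : 0 < μ.re := by rw [hre]; positivity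
  set c : ℂ := ((ξ:ℂ) + Complex.I)⁻¹ with hc
  set g : SchwartzMap ℝ ℂ := TS hμ H with hg
  set v : SchwartzMap ℝ ℂ := c • (H - μ • g) with hv
  have hvcoe : ∀ y : ℝ, v y = c * (H y - μ * T μ H y) := by
    intro y
    rw [hv]
    simp [SchwartzMap.smul_apply, SchwartzMap.sub_apply, smul_eq_mul, hg]
  have hfun : ⇑v = fun y => c * (H y - μ * T μ H y) := funext hvcoe
  have hvd : ∀ x : ℝ, deriv v x = c * (deriv H x - μ * (H x - μ * T μ H x)) := by
    intro x
    have h1 : HasDerivAt (fun y : ℝ => c * (H y - μ * T μ H y))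
        (c * (deriv H x - μ * (T μ (SchwartzMap.derivCLM ℝ ℂ H) x))) x := by
      exact ((H.differentiable.differentiableAt.hasDerivAt).sub
        ((hasDerivAt_T hμ H x).const_mul μ)).const_mul c
    rw [hfun, h1.deriv, T_FTC hμ H x]
  have hc1 : (((ξ:ℂ) + Complex.I)) * c = 1 := mul_inv_cancel₀ hξ
  have hμc : μ * (((ξ:ℂ)) + Complex.I) = 2 * π * Complex.I * a := by
    rw [hμdef, div_mul_cancel₀ _ hξ]
  have hinv : (2 * (π:ℂ) * Complex.I) * (2 * (π:ℂ) * Complex.I)⁻¹ = 1 :=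
    mul_inv_cancel₀ two_pi_I_ne
  refine ⟨v, fun x => ?_, ?_⟩
  · have hmain : ((ξ:ℂ) + Complex.I) * deriv v x + (2 * π * Complex.I * a) * v x
        = deriv H x := by
      rw [hvd x, hvcoe x]
      linear_combination (deriv H x - μ * (H x - μ * T μ H x)) * hc1
        + (H x - μ * T μ H x) * μ * hc1 - (H x - μ * T μ H x) * c * hμc
    linear_combination (2 * (π:ℂ) * Complex.I)⁻¹ * hmain - (a : ℂ) * v x * hinv
  · -- L¹ bound
    set r : ℝ := ‖(ξ:ℂ) + Complex.I‖ with hr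
    have hr2 : r ^ 2 = ξ ^ 2 + 1 := by
      rw [hr, Complex.sq_norm]
      simp [Complex.normSq_apply]
      ring
    have hr0 : 0 ≤ r := norm_nonneg _
    have hr1 : 1 ≤ r := by nlinarith [sq_nonneg ξ]
    have habs : ‖μ‖ = 2 * π * a / r := by
      rw [hμdef, norm_div, ← hr]
      congr 1
      simp only [norm_mul, Complex.norm_real, Real.norm_eq_abs, Complex.norm_I, Complex.norm_two]
      rw [abs_of_pos pi_pos, abs_of_pos ha]
      ring
    have hkey : ‖μ‖ * (μ.re)⁻¹ = r := by
      rw [habs, hre, ← hr2]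
      have hπa : (0:ℝ) < 2 * π * a := by positivity
      have hrpos : (0:ℝ) < r := lt_of_lt_of_le one_pos hr1
      field_simp
    have hHI : Integrable (fun x : ℝ => ‖H x‖) := (H.integrable (μ := volume)).norm
    have hTI : Integrable (fun x : ℝ => ‖T μ H x‖) := (g.integrable (μ := volume)).norm
    have hT1 := T_L1 hμ H
    have h5 : (∫ x : ℝ, ‖v x‖) = r⁻¹ * ∫ x : ℝ, ‖H x - μ * T μ H x‖ := by
      rw [← integral_const_mul]
      congr 1
      funext x
      rw [hvcoe x, norm_mul, hc, norm_inv, hr]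
    have h6 : (∫ x : ℝ, ‖H x - μ * T μ H x‖)
        ≤ (∫ x : ℝ, ‖H x‖) + ‖μ‖ * ∫ x : ℝ, ‖T μ H x‖ := by
      have hint : Integrable (fun x : ℝ => ‖H x‖ + ‖μ‖ * ‖T μ H x‖) :=
        hHI.add (hTI.const_mul _)
      have := integral_mono_of_nonneg (f := fun x : ℝ => ‖H x - μ * T μ H x‖)
        (ae_of_all _ fun x => norm_nonneg _) hint (ae_of_all _ fun x => by
          refine (norm_sub_le _ _).trans ?_
          simp)
      rw [integral_add hHI (hTI.const_mul _), integral_const_mul] at this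
      exact this
    have hHnn : 0 ≤ ∫ x : ℝ, ‖H x‖ := integral_nonneg fun x => norm_nonneg _
    have h7 : ‖μ‖ * (∫ x : ℝ, ‖T μ H x‖) ≤ r * ∫ x : ℝ, ‖H x‖ := by
      calc ‖μ‖ * (∫ x : ℝ, ‖T μ H x‖)
          ≤ ‖μ‖ * (μ.re⁻¹ * ∫ x : ℝ, ‖H x‖) :=
            mul_le_mul_of_nonneg_left hT1 (norm_nonneg _)
        _ = (‖μ‖ * μ.re⁻¹) * ∫ x : ℝ, ‖H x‖ := by ring
        _ = r * ∫ x : ℝ, ‖H x‖ := by rw [hkey]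
    calc (∫ x : ℝ, ‖v x‖) = r⁻¹ * ∫ x : ℝ, ‖H x - μ * T μ H x‖ := h5
      _ ≤ r⁻¹ * ((∫ x : ℝ, ‖H x‖) + r * ∫ x : ℝ, ‖H x‖) := by
          apply mul_le_mul_of_nonneg_left ?_ (by positivity)
          exact h6.trans (by linarith)
      _ ≤ 2 * ∫ x : ℝ, ‖H x‖ := by
          rw [inv_mul_le_iff₀ (by positivity)]
          nlinarith

/-- Reflection operator on Schwartz space. -/
def R : SchwartzMap ℝ ℂ →L[ℝ] SchwartzMap ℝ ℂ :=
  SchwartzMap.compCLMOfContinuousLinearEquiv ℝ (ContinuousLinearEquiv.neg ℝ)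

lemma R_apply (f : SchwartzMap ℝ ℂ) (x : ℝ) : R f x = f (-x) := rfl

lemma R_coe (f : SchwartzMap ℝ ℂ) : ⇑(R f) = fun x => f (-x) := rfl

lemma R_deriv (f : SchwartzMap ℝ ℂ) (x : ℝ) : deriv (R f) x = -deriv f (-x) := by
  have h := HasDerivAt.comp_const_sub (f := ⇑f) (f' := deriv f (0 - x)) 0 x
    (f.differentiable.differentiableAt.hasDerivAt)
  simp only [zero_sub] at h
  rw [R_coe]
  exact h.deriv

/-- Existence for `a = 0`. -/
lemma sol_zero (ξ : ℝ) (H : SchwartzMap ℝ ℂ) :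
    ∃ v : SchwartzMap ℝ ℂ,
      (∀ x : ℝ, (ξ + Complex.I) * (deriv v x / (2 * π * Complex.I)) + (0:ℝ) * v x
          = deriv H x / (2 * π * Complex.I)) ∧
      (∫ x : ℝ, ‖v x‖) ≤ 2 * ∫ x : ℝ, ‖H x‖ := by
  have hξ := xi_ne ξ
  set c : ℂ := ((ξ:ℂ) + Complex.I)⁻¹ with hc
  have hc1 : (((ξ:ℂ) + Complex.I)) * c = 1 := mul_inv_cancel₀ hξ
  set v : SchwartzMap ℝ ℂ := c • H with hv
  have hvcoe : ∀ y : ℝ, v y = c * H y := by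
    intro y; rw [hv]; simp [SchwartzMap.smul_apply, smul_eq_mul]
  have hfun : ⇑v = fun y => c * H y := funext hvcoe
  have hvd : ∀ x : ℝ, deriv v x = c * deriv H x := by
    intro x
    rw [hfun]
    exact ((H.differentiable.differentiableAt.hasDerivAt).const_mul c).deriv
  refine ⟨v, fun x => ?_, ?_⟩
  · rw [hvd x]
    push_cast
    linear_combination (deriv H x * (2 * (π:ℂ) * Complex.I)⁻¹) * hc1
  · have h5 : (∫ x : ℝ, ‖v x‖) = ‖c‖ * ∫ x : ℝ, ‖H x‖ := by
      rw [← integral_const_mul]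
      congr 1
      funext x
      rw [hvcoe x, norm_mul]
    rw [h5]
    have hHnn : 0 ≤ ∫ x : ℝ, ‖H x‖ := integral_nonneg fun x => norm_nonneg _
    have hcle : ‖c‖ ≤ 1 := by
      rw [hc, norm_inv]
      rw [inv_le_one_iff₀]
      right
      have : (1:ℝ) ^ 2 ≤ ‖(ξ:ℂ) + Complex.I‖ ^ 2 := by
        rw [Complex.sq_norm]
        simp [Complex.normSq_apply]
        nlinarith [sq_nonneg ξ]
      nlinarith [norm_nonneg ((ξ:ℂ) + Complex.I)]
    nlinarith [norm_nonneg c]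

/-- Existence for all `a`. -/
lemma sol_all (a ξ : ℝ) (H : SchwartzMap ℝ ℂ) :
    ∃ v : SchwartzMap ℝ ℂ,
      (∀ x : ℝ, (ξ + Complex.I) * (deriv v x / (2 * π * Complex.I)) + a * v x
          = deriv H x / (2 * π * Complex.I)) ∧
      (∫ x : ℝ, ‖v x‖) ≤ 2 * ∫ x : ℝ, ‖H x‖ := by
  rcases lt_trichotomy a 0 with ha | ha | ha
  · obtain ⟨u, hu, hub⟩ := sol_pos (-a) ξ (by linarith) (R H)
    refine ⟨R u, fun x => ?_, ?_⟩
    · have h := hu (-x)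
      rw [R_deriv H (-x)] at h
      simp only [neg_neg] at h
      rw [R_deriv u x, R_apply u x]
      push_cast at h ⊢
      linear_combination -h
    · have h1 : (∫ x : ℝ, ‖(R u) x‖) = ∫ x : ℝ, ‖u x‖ := by
        simp_rw [R_apply]
        exact integral_neg_eq_self (fun x => ‖u x‖) volume
      have h2 : (∫ x : ℝ, ‖(R H) x‖) = ∫ x : ℝ, ‖H x‖ := by
        simp_rw [R_apply]
        exact integral_neg_eq_self (fun x => ‖H x‖) volume
      rw [h1, ← h2]
      exact hub
  · subst ha
    exact sol_zero ξ H
  · exact sol_pos a ξ ha H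

end ODE4
end

open MeasureTheory Real

/-- The ODE `(ξ+i) D_x v + a v = D_x H` has a unique Schwartz solution `v`, satisfying
`‖v‖_{L¹} ≤ C ‖H‖_{L¹}` with an absolute constant; moreover if `a ≠ 0` then `v = D_x w`
for some Schwartz `w`. -/
theorem stmt4 : ∃ C : ℝ, 0 < C ∧ ∀ (a ξ : ℝ) (H : SchwartzMap ℝ ℂ),
    (∃! v : SchwartzMap ℝ ℂ, ∀ x : ℝ,
        (ξ + Complex.I) * (deriv v x / (2 * π * Complex.I)) + a * v x
          = deriv H x / (2 * π * Complex.I)) ∧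
    ∀ v : SchwartzMap ℝ ℂ,
      (∀ x : ℝ, (ξ + Complex.I) * (deriv v x / (2 * π * Complex.I)) + a * v x
          = deriv H x / (2 * π * Complex.I)) →
      (∫ x : ℝ, ‖v x‖) ≤ C * (∫ x : ℝ, ‖H x‖) ∧
      (a ≠ 0 → ∃ w : SchwartzMap ℝ ℂ, ∀ x : ℝ, v x = deriv w x / (2 * π * Complex.I)) := by
  refine ⟨2, two_pos, fun a ξ H => ?_⟩
  obtain ⟨v₀, h₀, hb₀⟩ := ODE4.sol_all a ξ H
  refine ⟨⟨v₀, h₀, fun v hv => ODE4.uniq a ξ H v v₀ hv h₀⟩, fun v hv => ⟨?_, fun ha => ?_⟩⟩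
  · rw [ODE4.uniq a ξ H v v₀ hv h₀]
    exact hb₀
  · -- antiderivative
    have ha' : (a:ℂ) ≠ 0 := Complex.ofReal_ne_zero.mpr ha
    have haInv : (a:ℂ) * (a:ℂ)⁻¹ = 1 := mul_inv_cancel₀ ha'
    set w : SchwartzMap ℝ ℂ := (a:ℂ)⁻¹ • (H - ((ξ:ℂ) + Complex.I) • v) with hw
    have hwcoe : ∀ y : ℝ, w y = (a:ℂ)⁻¹ * (H y - ((ξ:ℂ) + Complex.I) * v y) := by
      intro y
      rw [hw]
      simp [SchwartzMap.smul_apply, SchwartzMap.sub_apply, smul_eq_mul]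
    have hfun : ⇑w = fun y => (a:ℂ)⁻¹ * (H y - ((ξ:ℂ) + Complex.I) * v y) := funext hwcoe
    have hwd : ∀ x : ℝ, deriv w x
        = (a:ℂ)⁻¹ * (deriv H x - ((ξ:ℂ) + Complex.I) * deriv v x) := by
      intro x
      rw [hfun]
      exact ((H.differentiable.differentiableAt.hasDerivAt.sub
        (v.differentiable.differentiableAt.hasDerivAt.const_mul _)).const_mul _).deriv
    refine ⟨w, fun x => ?_⟩
    rw [hwd x]
    linear_combination (a:ℂ)⁻¹ * hv x - v x * haInv
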